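/- Transfer principle (Grosshans): Let G be an affine algebraic group over a field k, H ⊆ G a closed subgroup, and N a rational G-module. Then there is a natural k-linear isomorphism (k[G]^H ⊗ N)^G ≅ N^H, where G acts on k[G] by left translation and H acts on k[G] by right translation. -/

import Mathlib

open TensorProduct Coalgebra

section defs

variable (k : Type) [Field k]

/-- `δ : V → V ⊗ C` is a (counital, coassociative) right comodule structure,
i.e. a rational representation of the affine group scheme `Spec C`. -/
def IsComodule {C V : Type} [CommRing C] [Bialgebra k C]
    [AddCommGroup V] [Module k V] (δ : V →ₗ[k] V ⊗[k] C) : Prop :=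
  ((TensorProduct.rid k V).toLinearMap ∘ₗ
      TensorProduct.map LinearMap.id (counit (R := k) (A := C)) ∘ₗ δ = LinearMap.id) ∧
  ((TensorProduct.assoc k V C C).toLinearMap ∘ₗ TensorProduct.map δ LinearMap.id ∘ₗ δ =
      TensorProduct.map LinearMap.id (comul (R := k)) ∘ₗ δ)

variable {C V : Type} [CommRing C] [Bialgebra k C] [AddCommGroup V] [Module k V]

/-- The invariants (coinvariants) of a coaction: `{v | δ v = v ⊗ 1}`. -/
noncomputable def coinvariants (δ : V →ₗ[k] V ⊗[k] C) : Submodule k V :=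
  LinearMap.ker (δ - (TensorProduct.mk k V C).flip 1)

variable {A B : Type} [CommRing A] [HopfAlgebra k A] [CommRing B] [HopfAlgebra k B]

/-- The right-translation coaction of `K` (with `k[K] = B`) on `k[G] = A`,
`f ↦ Σ f₁ ⊗ π(f₂)`; its invariants are `k[G]^K`. -/
noncomputable def rightCoact (π : A →ₐ[k] B) : A →ₗ[k] A ⊗[k] B :=
  TensorProduct.map LinearMap.id π.toLinearMap ∘ₗ comul

/-- The left-translation coaction of `G` on `k[G] = A`, written as a right
`A`-comodule structure `f ↦ Σ f₂ ⊗ S(f₁)`. -/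
noncomputable def leftCoact : A →ₗ[k] A ⊗[k] A :=
  TensorProduct.map LinearMap.id (HopfAlgebra.antipode (R := k)) ∘ₗ
    (TensorProduct.comm k A A).toLinearMap ∘ₗ comul

variable {N : Type} [AddCommGroup N] [Module k N]

/-- The diagonal `G`-coaction on `k[G] ⊗ N`, combining left translation on
`k[G]` with the given coaction on `N`. -/
noncomputable def diagCoact (δN : N →ₗ[k] N ⊗[k] A) :
    A ⊗[k] N →ₗ[k] (A ⊗[k] N) ⊗[k] A :=
  TensorProduct.map LinearMap.id (LinearMap.mul' k A) ∘ₗ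
    (TensorProduct.tensorTensorTensorComm k A A N A).toLinearMap ∘ₗ
      TensorProduct.map (leftCoact k) δN

end defs

section helpers
open LinearMap

set_option maxHeartbeats 1000000
set_option synthInstance.maxHeartbeats 400000
variable (k : Type) [Field k]
variable {A B : Type} [CommRing A] [HopfAlgebra k A] [CommRing B] [HopfAlgebra k B]
variable {N : Type} [AddCommGroup N] [Module k N]

lemma mul'_comp_comm : (LinearMap.mul' k A) ∘ₗ (TensorProduct.comm k A A).toLinearMap
    = LinearMap.mul' k A := by
  apply TensorProduct.ext'; intro a b; simp [mul_comm]

lemma mul'_comp_leftCoact : (LinearMap.mul' k A) ∘ₗ leftCoact k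
    = (Algebra.linearMap k A) ∘ₗ counit := by
  have h1 : ((HopfAlgebra.antipode (R := k) (A := A)).lTensor A) ∘ₗ
      (TensorProduct.comm k A A).toLinearMap
      = (TensorProduct.comm k A A).toLinearMap ∘ₗ ((HopfAlgebra.antipode (R := k)).rTensor A) := by
    apply TensorProduct.ext'; intro a b; simp
  calc (LinearMap.mul' k A) ∘ₗ leftCoact k
      = ((LinearMap.mul' k A) ∘ₗ ((HopfAlgebra.antipode (R := k)).lTensor A ∘ₗ
          (TensorProduct.comm k A A).toLinearMap)) ∘ₗ comul := by
        rw [leftCoact]; rfl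
    _ = ((LinearMap.mul' k A) ∘ₗ ((TensorProduct.comm k A A).toLinearMap ∘ₗ
          (HopfAlgebra.antipode (R := k)).rTensor A)) ∘ₗ comul := by rw [h1]
    _ = (LinearMap.mul' k A) ∘ₗ (HopfAlgebra.antipode (R := k)).rTensor A ∘ₗ comul := by
        rw [← LinearMap.comp_assoc ((HopfAlgebra.antipode (R := k) (A := A)).rTensor A)
          (TensorProduct.comm k A A).toLinearMap (LinearMap.mul' k A)]
        rw [mul'_comp_comm]
        rfl
    _ = (Algebra.linearMap k A) ∘ₗ counit := HopfAlgebra.mul_antipode_rTensor_comul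

/-- the shuffle `x ⊗ (p ⊗ q) ↦ p ⊗ (q ⊗ x)`. -/
noncomputable def sh2 : A ⊗[k] (A ⊗[k] A) →ₗ[k] A ⊗[k] (A ⊗[k] A) :=
  (TensorProduct.comm k A A).toLinearMap.lTensor A ∘ₗ
    (TensorProduct.assoc k A A A).toLinearMap ∘ₗ
      (TensorProduct.comm k A A).toLinearMap.rTensor A ∘ₗ
        (TensorProduct.assoc k A A A).symm.toLinearMap

@[simp] lemma sh2_tmul (x p q : A) : sh2 k (x ⊗ₜ[k] (p ⊗ₜ[k] q)) = p ⊗ₜ[k] (q ⊗ₜ[k] x) := by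
  simp [sh2]

/-- `K1 (b ⊗ c) = Σ c₃? ...` : `b ⊗ c ↦ Σ (leftCoact c)₁ ⊗ (leftCoact c)₂ * b`. -/
noncomputable def K1 : A ⊗[k] A →ₗ[k] A ⊗[k] A :=
  (LinearMap.mul' k A).lTensor A ∘ₗ sh2 k ∘ₗ (leftCoact k).lTensor A

lemma K1_comp_comul : K1 k ∘ₗ comul = (TensorProduct.mk k A A).flip 1 := by
  have hms : (LinearMap.mul' k A) ∘ₗ (HopfAlgebra.antipode (R := k)).lTensor A ∘ₗ comul
      = (Algebra.linearMap k A) ∘ₗ counit := HopfAlgebra.mul_antipode_lTensor_comul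
  have hmap2a : ((LinearMap.mul' k A).lTensor A ∘ₗ sh2 k ∘ₗ
        (((HopfAlgebra.antipode (R := k)).lTensor A ∘ₗ
          (TensorProduct.comm k A A).toLinearMap).lTensor A)) ∘ₗ
        (TensorProduct.assoc k A A A).toLinearMap
      = (TensorProduct.comm k A A).toLinearMap ∘ₗ
        ((LinearMap.mul' k A ∘ₗ (HopfAlgebra.antipode (R := k)).lTensor A).rTensor A) := by
    apply TensorProduct.ext'
    intro z c
    induction z using TensorProduct.induction_on with
    | zero => rw [zero_tmul]; simp only [map_zero]
    | tmul x y => simp [mul_comm]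
    | add u w hu hw =>
      rw [add_tmul]
      simp only [map_add] at *
      rw [hu, hw]
  have hsplit : (leftCoact k (A := A)).lTensor A
      = (((HopfAlgebra.antipode (R := k)).lTensor A ∘ₗ
          (TensorProduct.comm k A A).toLinearMap).lTensor A) ∘ₗ (comul (R := k)).lTensor A := by
    rw [← LinearMap.lTensor_comp]; rfl
  ext a
  have hcoassoc := Coalgebra.coassoc_apply (R := k) a
  calc (K1 k ∘ₗ comul) a
      = (LinearMap.mul' k A).lTensor A ((sh2 k)
          ((((HopfAlgebra.antipode (R := k)).lTensor A ∘ₗ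
            (TensorProduct.comm k A A).toLinearMap).lTensor A)
            ((comul (R := k)).lTensor A (comul a)))) := by
        simp only [K1, LinearMap.comp_apply, hsplit]
    _ = (LinearMap.mul' k A).lTensor A ((sh2 k)
          ((((HopfAlgebra.antipode (R := k)).lTensor A ∘ₗ
            (TensorProduct.comm k A A).toLinearMap).lTensor A)
            ((TensorProduct.assoc k A A A) ((comul (R := k)).rTensor A (comul a))))) := by
        rw [hcoassoc]
    _ = (TensorProduct.comm k A A)
          (((LinearMap.mul' k A ∘ₗ (HopfAlgebra.antipode (R := k)).lTensor A).rTensor A)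
            ((comul (R := k)).rTensor A (comul a))) := by
        have := LinearMap.congr_fun hmap2a ((comul (R := k)).rTensor A (comul a))
        simpa only [LinearMap.comp_apply, LinearEquiv.coe_coe] using this
    _ = (TensorProduct.comm k A A)
          ((((LinearMap.mul' k A ∘ₗ (HopfAlgebra.antipode (R := k)).lTensor A) ∘ₗ
            (comul (R := k))).rTensor A) (comul a)) := by
        simp only [LinearMap.rTensor_comp, LinearMap.comp_apply]
    _ = (TensorProduct.comm k A A)
          (((Algebra.linearMap k A ∘ₗ (counit (R := k))).rTensor A) (comul a)) := by
        rw [LinearMap.comp_assoc, hms]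
    _ = (TensorProduct.comm k A A)
          (((Algebra.linearMap k A).rTensor A) (((counit (R := k)).rTensor A) (comul a))) := by
        simp only [LinearMap.rTensor_comp, LinearMap.comp_apply]
    _ = ((TensorProduct.mk k A A).flip 1) a := by
        rw [Coalgebra.rTensor_counit_comul]; simp


lemma hbig_lemma :
    (TensorProduct.map LinearMap.id (LinearMap.mul' k A)) ∘ₗ
      (TensorProduct.tensorTensorTensorComm k A A N A).toLinearMap ∘ₗ
        (TensorProduct.comm k (N ⊗[k] A) (A ⊗[k] A)).toLinearMap ∘ₗ
          (leftCoact k (A := A)).lTensor (N ⊗[k] A) ∘ₗ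
            (TensorProduct.assoc k N A A).symm.toLinearMap ∘ₗ
              (comul (R := k) (A := A)).lTensor N
    = ((TensorProduct.mk k (A ⊗[k] N) A).flip 1) ∘ₗ (TensorProduct.comm k N A).toLinearMap := by
  apply TensorProduct.ext'
  intro n a
  have claim : ∀ z : A ⊗[k] A,
      (TensorProduct.map LinearMap.id (LinearMap.mul' k A))
        ((TensorProduct.tensorTensorTensorComm k A A N A)
          ((TensorProduct.comm k (N ⊗[k] A) (A ⊗[k] A))
            ((leftCoact k (A := A)).lTensor (N ⊗[k] A)
              ((TensorProduct.assoc k N A A).symm (n ⊗ₜ[k] z)))))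
      = (TensorProduct.comm k N A).toLinearMap.rTensor A
          ((TensorProduct.assoc k N A A).symm (n ⊗ₜ[k] (K1 k z))) := by
    intro z
    induction z using TensorProduct.induction_on with
    | zero => simp
    | tmul b c =>
      simp only [TensorProduct.assoc_symm_tmul, LinearMap.lTensor_tmul,
        TensorProduct.comm_tmul, K1, LinearMap.comp_apply]
      generalize leftCoact k (A := A) c = w
      induction w using TensorProduct.induction_on with
      | zero => simp
      | tmul p q => simp
      | add w1 w2 h1 h2 =>
        simp only [TensorProduct.tmul_add, TensorProduct.add_tmul, map_add, h1, h2]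
    | add z1 z2 h1 h2 =>
      simp only [TensorProduct.tmul_add, TensorProduct.add_tmul, map_add, h1, h2]
  simp only [LinearMap.comp_apply, LinearMap.lTensor_tmul, LinearMap.id_coe, id_eq,
    LinearEquiv.coe_coe]
  rw [claim (comul a)]
  rw [show K1 k (comul a) = a ⊗ₜ[k] (1 : A) from LinearMap.congr_fun (K1_comp_comul k) a]
  simp

lemma diag_psi (δN : N →ₗ[k] N ⊗[k] A) (hN : IsComodule k δN) (v : N) :
    diagCoact k δN ((TensorProduct.comm k N A) (δN v))
      = ((TensorProduct.comm k N A) (δN v)) ⊗ₜ[k] (1 : A) := by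
  have h2 : (TensorProduct.map (leftCoact k) δN) ∘ₗ (TensorProduct.comm k N A).toLinearMap
      = (TensorProduct.comm k (N ⊗[k] A) (A ⊗[k] A)).toLinearMap ∘ₗ
          (TensorProduct.map δN (leftCoact k)) := by
    apply TensorProduct.ext'; intro n a; simp
  have h3 : (δN.rTensor A) (δN v)
      = (TensorProduct.assoc k N A A).symm ((comul (R := k)).lTensor N (δN v)) := by
    rw [LinearEquiv.eq_symm_apply]
    have := LinearMap.congr_fun hN.2 v
    simp only [LinearMap.comp_apply, LinearEquiv.coe_coe] at this
    exact this
  have h4 : (TensorProduct.map δN (leftCoact k)) (δN v)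
      = (leftCoact k (A := A)).lTensor (N ⊗[k] A)
          ((TensorProduct.assoc k N A A).symm ((comul (R := k)).lTensor N (δN v))) := by
    rw [← h3, ← LinearMap.lTensor_comp_rTensor]
    rfl
  have hfin := LinearMap.congr_fun (hbig_lemma k (A := A) (N := N)) (δN v)
  simp only [LinearMap.comp_apply, LinearEquiv.coe_coe] at hfin
  have h2' := LinearMap.congr_fun h2 (δN v)
  simp only [LinearMap.comp_apply, LinearEquiv.coe_coe] at h2'
  simp only [diagCoact, LinearMap.comp_apply, LinearEquiv.coe_coe]
  rw [h2', h4]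
  simpa using hfin


noncomputable def phiMap : A ⊗[k] N →ₗ[k] N :=
  (TensorProduct.lid k N).toLinearMap ∘ₗ (counit (R := k) (A := A)).rTensor N

noncomputable def psiMap (δN : N →ₗ[k] N ⊗[k] A) : N →ₗ[k] A ⊗[k] N :=
  (TensorProduct.comm k N A).toLinearMap ∘ₗ δN

lemma phi_psi (δN : N →ₗ[k] N ⊗[k] A) (hN : IsComodule k δN) (v : N) :
    phiMap k (psiMap k δN v) = v := by
  have hc : (phiMap k (A := A) (N := N)) ∘ₗ (TensorProduct.comm k N A).toLinearMap
      = (TensorProduct.rid k N).toLinearMap ∘ₗ (counit (R := k) (A := A)).lTensor N := by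
    apply TensorProduct.ext'; intro n a; simp [phiMap]
  have h1 := LinearMap.congr_fun hc (δN v)
  have h2 := LinearMap.congr_fun hN.1 v
  simp only [LinearMap.comp_apply, LinearEquiv.coe_coe, LinearMap.id_coe, id_eq] at h1 h2
  simp only [psiMap, LinearMap.comp_apply, LinearEquiv.coe_coe]
  rw [h1]
  exact h2

noncomputable def thetaMap : (A ⊗[k] N) ⊗[k] A →ₗ[k] A ⊗[k] N :=
  (LinearMap.mul' k A).rTensor N ∘ₗ (TensorProduct.assoc k A A N).symm.toLinearMap ∘ₗ
    (TensorProduct.comm k N A).toLinearMap.lTensor A ∘ₗ (TensorProduct.assoc k A N A).toLinearMap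

lemma theta_tmul_one (x : A ⊗[k] N) : thetaMap k (x ⊗ₜ[k] (1 : A)) = x := by
  induction x using TensorProduct.induction_on with
  | zero => simp
  | tmul a n => simp [thetaMap]
  | add x1 x2 h1 h2 => rw [TensorProduct.add_tmul, map_add, h1, h2]

lemma theta_diag (δN : N →ₗ[k] N ⊗[k] A) (x : A ⊗[k] N) :
    thetaMap k (diagCoact k δN x) = psiMap k δN (phiMap k x) := by
  have h4a : ∀ (z : A ⊗[k] A) (y : N ⊗[k] A),
      thetaMap k ((TensorProduct.map LinearMap.id (LinearMap.mul' k A))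
        ((TensorProduct.tensorTensorTensorComm k A A N A) (z ⊗ₜ[k] y)))
      = (LinearMap.mul' k A).rTensor N ((TensorProduct.assoc k A A N).symm
          ((LinearMap.mul' k A z) ⊗ₜ[k] ((TensorProduct.comm k N A) y))) := by
    intro z y
    induction z using TensorProduct.induction_on with
    | zero => simp
    | tmul p q =>
      induction y using TensorProduct.induction_on with
      | zero => simp
      | tmul n c => simp [thetaMap, mul_assoc]
      | add y1 y2 g1 g2 =>
        simp only [TensorProduct.tmul_add, TensorProduct.add_tmul, map_add, g1, g2]
    | add z1 z2 g1 g2 =>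
      simp only [TensorProduct.tmul_add, TensorProduct.add_tmul, map_add, g1, g2]
  have h5 : ∀ w : A ⊗[k] N,
      (LinearMap.mul' k A).rTensor N ((TensorProduct.assoc k A A N).symm ((1 : A) ⊗ₜ[k] w))
        = w := by
    intro w
    induction w using TensorProduct.induction_on with
    | zero => simp
    | tmul a n => simp
    | add w1 w2 g1 g2 => rw [TensorProduct.tmul_add, map_add, map_add, g1, g2]
  induction x using TensorProduct.induction_on with
  | zero => simp
  | tmul a n =>
    simp only [diagCoact, LinearMap.comp_apply, LinearEquiv.coe_coe, TensorProduct.map_tmul]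
    rw [h4a]
    have hm := LinearMap.congr_fun (mul'_comp_leftCoact k) a
    simp only [LinearMap.comp_apply] at hm
    rw [hm, show (Algebra.linearMap k A) (counit (R := k) a) = (counit (R := k) a) • (1 : A) by
      simp [Algebra.linearMap_apply, Algebra.algebraMap_eq_smul_one]]
    rw [← TensorProduct.smul_tmul', map_smul, map_smul, h5]
    simp only [phiMap, psiMap, LinearMap.comp_apply, LinearEquiv.coe_coe,
      LinearMap.rTensor_tmul, TensorProduct.lid_tmul, map_smul]
  | add x1 x2 g1 g2 => simp only [map_add, g1, g2]

lemma psi_phi (δN : N →ₗ[k] N ⊗[k] A) (x : A ⊗[k] N)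
    (hx : diagCoact k δN x = x ⊗ₜ[k] (1 : A)) :
    psiMap k δN (phiMap k x) = x := by
  rw [← theta_diag k δN x, hx, theta_tmul_one]


noncomputable def eexMap : (A ⊗[k] B) ⊗[k] N →ₗ[k] N ⊗[k] B :=
  (TensorProduct.comm k B N).toLinearMap ∘ₗ
    ((TensorProduct.lid k B).toLinearMap ∘ₗ (counit (R := k) (A := A)).rTensor B).rTensor N

lemma phi_lands (π : A →ₐ[k] B) (δN : N →ₗ[k] N ⊗[k] A) (hN : IsComodule k δN)
    (x : A ⊗[k] N)
    (hker : ((rightCoact k π - (TensorProduct.mk k A B).flip 1).rTensor N) x = 0)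
    (hx : diagCoact k δN x = x ⊗ₜ[k] (1 : A)) :
    (π.toLinearMap.lTensor N) (δN (phiMap k x)) = (phiMap k x) ⊗ₜ[k] (1 : B) := by
  set v := phiMap k x with hv
  have hx' : x = psiMap k δN v := (psi_phi k δN x hx).symm
  have hsub : ((rightCoact k π).rTensor N) x
      = (((TensorProduct.mk k A B).flip 1).rTensor N) x := by
    rw [LinearMap.rTensor_sub] at hker
    rw [← sub_eq_zero]
    exact hker
  have hcore : ((TensorProduct.lid k B).toLinearMap ∘ₗ (counit (R := k) (A := A)).rTensor B) ∘ₗ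
      rightCoact k π = π.toLinearMap := by
    ext a
    simp only [rightCoact, LinearMap.comp_apply, LinearEquiv.coe_coe]
    rw [show (TensorProduct.map LinearMap.id π.toLinearMap : A ⊗[k] A →ₗ[k] A ⊗[k] B)
      = π.toLinearMap.lTensor A from rfl]
    rw [← LinearMap.comp_apply (f := (counit (R := k) (A := A)).rTensor B),
      LinearMap.rTensor_comp_lTensor, ← LinearMap.lTensor_comp_rTensor, LinearMap.comp_apply]
    rw [show ((counit (R := k) (A := A)).rTensor A) (comul a) = (1 : k) ⊗ₜ[k] a from
      Coalgebra.rTensor_counit_comul a]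
    simp
  have hErho : ∀ y : N ⊗[k] A,
      eexMap k (((rightCoact k π).rTensor N) ((TensorProduct.comm k N A) y))
        = π.toLinearMap.lTensor N y := by
    have hmap : eexMap k ∘ₗ ((rightCoact k π).rTensor N) ∘ₗ (TensorProduct.comm k N A).toLinearMap
        = π.toLinearMap.lTensor N := by
      apply TensorProduct.ext'
      intro n a
      have := LinearMap.congr_fun hcore a
      simp only [LinearMap.comp_apply, LinearEquiv.coe_coe] at this
      simp only [eexMap, LinearMap.comp_apply, LinearEquiv.coe_coe, TensorProduct.comm_tmul,
        LinearMap.rTensor_tmul, LinearMap.lTensor_tmul, this]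
    intro y
    have := LinearMap.congr_fun hmap y
    simpa only [LinearMap.comp_apply, LinearEquiv.coe_coe] using this
  have hEone : ∀ y : N ⊗[k] A,
      eexMap k ((((TensorProduct.mk k A B).flip 1).rTensor N) ((TensorProduct.comm k N A) y))
        = ((TensorProduct.rid k N) ((counit (R := k) (A := A)).lTensor N y)) ⊗ₜ[k] (1 : B) := by
    have hmap : eexMap k ∘ₗ (((TensorProduct.mk k A B).flip 1).rTensor N) ∘ₗ
          (TensorProduct.comm k N A).toLinearMap
        = ((TensorProduct.mk k N B).flip 1) ∘ₗ (TensorProduct.rid k N).toLinearMap ∘ₗ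
            (counit (R := k) (A := A)).lTensor N := by
      apply TensorProduct.ext'
      intro n a
      simp only [eexMap, LinearMap.comp_apply, LinearEquiv.coe_coe, TensorProduct.comm_tmul,
        LinearMap.rTensor_tmul, LinearMap.lTensor_tmul, TensorProduct.mk_apply,
        LinearMap.flip_apply, TensorProduct.lid_tmul, TensorProduct.rid_tmul]
      rw [TensorProduct.tmul_smul, TensorProduct.smul_tmul']
    intro y
    have := LinearMap.congr_fun hmap y
    simpa only [LinearMap.comp_apply, LinearEquiv.coe_coe, TensorProduct.mk_apply,
      LinearMap.flip_apply] using this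
  have hcounit := LinearMap.congr_fun hN.1 v
  simp only [LinearMap.comp_apply, LinearEquiv.coe_coe, LinearMap.id_coe, id_eq] at hcounit
  have hfin := congrArg (eexMap k (A := A) (B := B) (N := N)) hsub
  rw [hx'] at hfin
  simp only [psiMap, LinearMap.comp_apply, LinearEquiv.coe_coe] at hfin
  rw [hErho (δN v), hEone (δN v)] at hfin
  rw [hfin]
  rw [show (counit (R := k) (A := A)).lTensor N (δN v)
    = (TensorProduct.map LinearMap.id (counit (R := k) (A := A))) (δN v) from rfl]
  rw [hcounit]

lemma psi_lands (π : A →ₐ[k] B) (δN : N →ₗ[k] N ⊗[k] A) (hN : IsComodule k δN) (v : N)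
    (hv : π.toLinearMap.lTensor N (δN v) = v ⊗ₜ[k] (1 : B)) :
    ((rightCoact k π).rTensor N) (psiMap k δN v)
      = (((TensorProduct.mk k A B).flip 1).rTensor N) (psiMap k δN v) := by
  have hW1 : ∀ y : N ⊗[k] A,
      (TensorProduct.comm k N (A ⊗[k] B)) ((TensorProduct.assoc k N A B) (y ⊗ₜ[k] (1 : B)))
        = (((TensorProduct.mk k A B).flip 1).rTensor N) ((TensorProduct.comm k N A) y) := by
    intro y
    induction y using TensorProduct.induction_on with
    | zero => simp
    | tmul n a => simp
    | add y1 y2 g1 g2 => rw [TensorProduct.add_tmul, map_add, map_add, map_add, map_add, g1, g2]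
  have hW2 : ((TensorProduct.comm k N (A ⊗[k] B)).toLinearMap ∘ₗ
        (TensorProduct.assoc k N A B).toLinearMap) ∘ₗ
          (π.toLinearMap.lTensor (N ⊗[k] A)) ∘ₗ (TensorProduct.assoc k N A A).symm.toLinearMap
      = ((π.toLinearMap.lTensor A).rTensor N) ∘ₗ
          (TensorProduct.comm k N (A ⊗[k] A)).toLinearMap := by
    apply TensorProduct.ext'
    intro n z
    induction z using TensorProduct.induction_on with
    | zero => simp
    | tmul b c => simp
    | add z1 z2 g1 g2 => rw [TensorProduct.tmul_add, map_add, map_add, g1, g2]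
  have hW4 : ((comul (R := k) (A := A)).rTensor N) ∘ₗ (TensorProduct.comm k N A).toLinearMap
      = (TensorProduct.comm k N (A ⊗[k] A)).toLinearMap ∘ₗ ((comul (R := k)).lTensor N) := by
    apply TensorProduct.ext'; intro n a; simp
  have h3 : (δN.rTensor A) (δN v)
      = (TensorProduct.assoc k N A A).symm ((comul (R := k)).lTensor N (δN v)) := by
    rw [LinearEquiv.eq_symm_apply]
    have := LinearMap.congr_fun hN.2 v
    simp only [LinearMap.comp_apply, LinearEquiv.coe_coe] at this
    exact this
  -- right-hand side via Wmap
  have rhs_eq : (TensorProduct.comm k N (A ⊗[k] B))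
        ((TensorProduct.assoc k N A B) ((δN.rTensor B) (v ⊗ₜ[k] (1 : B))))
      = (((TensorProduct.mk k A B).flip 1).rTensor N) (psiMap k δN v) := by
    rw [LinearMap.rTensor_tmul]
    rw [hW1 (δN v)]
    rfl
  -- left-hand side via Wmap
  have lhs_eq : (TensorProduct.comm k N (A ⊗[k] B))
        ((TensorProduct.assoc k N A B) ((δN.rTensor B) ((π.toLinearMap.lTensor N) (δN v))))
      = ((rightCoact k π).rTensor N) (psiMap k δN v) := by
    have e0 : (δN.rTensor B) ((π.toLinearMap.lTensor N) (δN v))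
        = (π.toLinearMap.lTensor (N ⊗[k] A)) ((δN.rTensor A) (δN v)) := by
      rw [← LinearMap.comp_apply, LinearMap.rTensor_comp_lTensor,
        ← LinearMap.lTensor_comp_rTensor, LinearMap.comp_apply]
    rw [e0, h3]
    have e1 := LinearMap.congr_fun hW2 ((comul (R := k)).lTensor N (δN v))
    simp only [LinearMap.comp_apply, LinearEquiv.coe_coe] at e1
    rw [e1]
    have e2 := LinearMap.congr_fun hW4 (δN v)
    simp only [LinearMap.comp_apply, LinearEquiv.coe_coe] at e2
    rw [← e2]
    have e3 : (rightCoact k π).rTensor N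
        = ((π.toLinearMap.lTensor A).rTensor N) ∘ₗ ((comul (R := k)).rTensor N) := by
      rw [← LinearMap.rTensor_comp]; rfl
    rw [e3]
    simp only [psiMap, LinearMap.comp_apply, LinearEquiv.coe_coe]
  rw [← lhs_eq, ← rhs_eq, hv]

lemma mem_coinv_iff {C V : Type} [CommRing C] [Bialgebra k C]
    [AddCommGroup V] [Module k V] (δ : V →ₗ[k] V ⊗[k] C) (x : V) :
    x ∈ coinvariants k δ ↔ δ x = x ⊗ₜ[k] (1 : C) := by
  simp only [coinvariants, LinearMap.mem_ker, LinearMap.sub_apply, sub_eq_zero,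
    LinearMap.flip_apply, TensorProduct.mk_apply]

end helpers

set_option maxHeartbeats 1000000
set_option synthInstance.maxHeartbeats 400000

/-- Grosshans' transfer principle: for an affine algebraic group `G` over a
field `k` with coordinate Hopf algebra `A = k[G]`, a closed subgroup `H` given
by a surjection `π : k[G] → k[H]` of Hopf algebras, and a rational `G`-module
`N` (an `A`-comodule), there is a `k`-linear isomorphism
`(k[G]^H ⊗ N)^G ≅ N^H`, where `G` acts diagonally on `k[G]^H ⊗ N` via left
translation on `k[G]^H`, and `H` acts on `k[G]` by right translation. -/
theorem transfer_principle
    (k : Type) [Field k]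
    (A : Type) [CommRing A] [HopfAlgebra k A]
    (B : Type) [CommRing B] [HopfAlgebra k B]
    (π : A →ₐ[k] B) (hsurj : Function.Surjective π)
    (hπcomul : TensorProduct.map π.toLinearMap π.toLinearMap ∘ₗ Coalgebra.comul =
      Coalgebra.comul (R := k) ∘ₗ π.toLinearMap)
    (hπcounit : Coalgebra.counit (R := k) ∘ₗ π.toLinearMap = Coalgebra.counit (R := k))
    (N : Type) [AddCommGroup N] [Module k N]
    (δN : N →ₗ[k] N ⊗[k] A) (hN : IsComodule k δN) :
    Nonempty
      ((↥(LinearMap.range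
            (TensorProduct.map (coinvariants k (rightCoact k π)).subtype
              (LinearMap.id (M := N))) ⊓
          coinvariants k (diagCoact k δN))) ≃ₗ[k]
        ↥(coinvariants k (TensorProduct.map LinearMap.id π.toLinearMap ∘ₗ δN))) := by
  classical
  set θ : A →ₗ[k] A ⊗[k] B := rightCoact k π - (TensorProduct.mk k A B).flip 1 with hθ
  have hexact : Function.Exact ((LinearMap.ker θ).subtype.rTensor N) (θ.rTensor N) :=
    Module.Flat.rTensor_exact N (LinearMap.exact_subtype_ker_map θ)
  set S1 : Submodule k (A ⊗[k] N) :=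
    LinearMap.range
        (TensorProduct.map (coinvariants k (rightCoact k π)).subtype (LinearMap.id (M := N))) ⊓
      coinvariants k (diagCoact k δN) with hS1
  set S2 : Submodule k N :=
    coinvariants k (TensorProduct.map LinearMap.id π.toLinearMap ∘ₗ δN) with hS2
  have hrange : LinearMap.range
      (TensorProduct.map (coinvariants k (rightCoact k π)).subtype (LinearMap.id (M := N)))
      = LinearMap.ker (θ.rTensor N) := by
    rw [hexact.linearMap_ker_eq]
    rfl
  have hS2mem : ∀ v : N, v ∈ S2 ↔ π.toLinearMap.lTensor N (δN v) = v ⊗ₜ[k] (1 : B) := by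
    intro v
    rw [hS2, mem_coinv_iff]
    rfl
  have hS1mem : ∀ x : A ⊗[k] N, x ∈ S1 ↔
      (θ.rTensor N) x = 0 ∧ diagCoact k δN x = x ⊗ₜ[k] (1 : A) := by
    intro x
    rw [hS1, Submodule.mem_inf, hrange, LinearMap.mem_ker, mem_coinv_iff]
  have hmemF : ∀ c : A ⊗[k] N, c ∈ S1 → phiMap k c ∈ S2 := by
    intro c hc
    rw [hS1mem] at hc
    rw [hS2mem]
    exact phi_lands k π δN hN c hc.1 hc.2
  have hmemG : ∀ v : N, v ∈ S2 → psiMap k δN v ∈ S1 := by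
    intro v hv
    rw [hS2mem] at hv
    rw [hS1mem]
    constructor
    · rw [hθ, LinearMap.rTensor_sub, LinearMap.sub_apply, sub_eq_zero]
      exact psi_lands k π δN hN v hv
    · exact diag_psi k δN hN v
  refine ⟨LinearEquiv.ofLinear
    (LinearMap.codRestrict S2 (phiMap k ∘ₗ S1.subtype) (fun c => hmemF c.1 c.2))
    (LinearMap.codRestrict S1 (psiMap k δN ∘ₗ S2.subtype) (fun v => hmemG v.1 v.2))
    ?_ ?_⟩
  · apply LinearMap.ext
    rintro ⟨v, hv⟩
    apply Subtype.ext
    simp only [LinearMap.comp_apply, LinearMap.codRestrict_apply, Submodule.coe_subtype,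
      LinearMap.id_coe, id_eq]
    exact phi_psi k δN hN v
  · apply LinearMap.ext
    rintro ⟨x, hx⟩
    apply Subtype.ext
    simp only [LinearMap.comp_apply, LinearMap.codRestrict_apply, Submodule.coe_subtype,
      LinearMap.id_coe, id_eq]
    exact psi_phi k δN x ((hS1mem x).mp hx).2
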